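/- Minkowski–Weyl decomposition: every nonempty polyhedron Q ⊆ ℝ^d can be written as Q = P + C + L, where P is a polytope, C is a pointed polyhedral cone, and L is a linear subspace. -/

import Mathlib

open Pointwise

def dotp {d : ℕ} (x y : Fin d → ℝ) : ℝ := ∑ i, x i * y i


/-- A polyhedron is a finite intersection of affine closed half-spaces. -/
def IsPolyhedron {d : ℕ} (P : Set (Fin d → ℝ)) : Prop :=
  ∃ (m : ℕ) (a : Fin m → Fin d → ℝ) (b : Fin m → ℝ),
    P = {x | ∀ i, dotp (a i) x ≤ b i}

/-- A polytope is the convex hull of finitely many points (a bounded polyhedron). -/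
def IsPolytope {d : ℕ} (P : Set (Fin d → ℝ)) : Prop :=
  ∃ V : Finset (Fin d → ℝ), P = convexHull ℝ (V : Set (Fin d → ℝ))

/-- A polyhedral cone: the positive hull of finitely many vectors. -/
def IsPolyhedralCone {d : ℕ} (C : Set (Fin d → ℝ)) : Prop :=
  ∃ (k : ℕ) (v : Fin k → (Fin d → ℝ)),
    C = {x | ∃ lam : Fin k → ℝ, (∀ i, 0 ≤ lam i) ∧ x = ∑ i, lam i • v i}

namespace MW


variable {d : ℕ}

lemma dotp_comm (x y : Fin d → ℝ) : dotp x y = dotp y x := by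
  unfold dotp; exact Finset.sum_congr rfl fun i _ => mul_comm _ _

lemma dotp_add_right (a x y : Fin d → ℝ) : dotp a (x + y) = dotp a x + dotp a y := by
  unfold dotp; rw [← Finset.sum_add_distrib]
  exact Finset.sum_congr rfl fun i _ => by simp [mul_add]

lemma dotp_smul_right (a : Fin d → ℝ) (c : ℝ) (x : Fin d → ℝ) :
    dotp a (c • x) = c * dotp a x := by
  unfold dotp; rw [Finset.mul_sum]
  exact Finset.sum_congr rfl fun i _ => by simp [Pi.smul_apply, smul_eq_mul]; ring

lemma dotp_zero_right (a : Fin d → ℝ) : dotp a 0 = 0 := by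
  unfold dotp; simp

lemma dotp_neg_right (a x : Fin d → ℝ) : dotp a (-x) = - dotp a x := by
  unfold dotp; rw [← Finset.sum_neg_distrib]
  exact Finset.sum_congr rfl fun i _ => by simp

lemma dotp_sub_right (a x y : Fin d → ℝ) : dotp a (x - y) = dotp a x - dotp a y := by
  rw [sub_eq_add_neg, dotp_add_right, dotp_neg_right, sub_eq_add_neg]

lemma dotp_add_left (x y a : Fin d → ℝ) : dotp (x + y) a = dotp x a + dotp y a := by
  rw [dotp_comm, dotp_add_right, dotp_comm a x, dotp_comm a y]

lemma dotp_smul_left (c : ℝ) (x a : Fin d → ℝ) : dotp (c • x) a = c * dotp x a := by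
  rw [dotp_comm, dotp_smul_right, dotp_comm a x]

lemma dotp_sub_left (x y a : Fin d → ℝ) : dotp (x - y) a = dotp x a - dotp y a := by
  rw [dotp_comm, dotp_sub_right, dotp_comm a x, dotp_comm a y]

/-- finitely generated cone over a list of generators -/
def lcone : List (Fin d → ℝ) → Set (Fin d → ℝ)
  | [] => {0}
  | v :: l => {x | ∃ t : ℝ, 0 ≤ t ∧ x - t • v ∈ lcone l}

lemma zero_mem_lcone (l : List (Fin d → ℝ)) : (0 : Fin d → ℝ) ∈ lcone l := by
  induction l with
  | nil => rfl
  | cons v l ih => exact ⟨0, le_refl 0, by simpa using ih⟩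

lemma lcone_add {l : List (Fin d → ℝ)} {x y : Fin d → ℝ}
    (hx : x ∈ lcone l) (hy : y ∈ lcone l) : x + y ∈ lcone l := by
  induction l generalizing x y with
  | nil => simp only [lcone, Set.mem_singleton_iff] at *; rw [hx, hy, add_zero]
  | cons v l ih =>
    obtain ⟨t, ht, hx⟩ := hx
    obtain ⟨s, hs, hy⟩ := hy
    exact ⟨t + s, by linarith, by
      have := ih hx hy
      convert this using 1
      rw [add_smul]; abel⟩

lemma lcone_smul {l : List (Fin d → ℝ)} {c : ℝ} (hc : 0 ≤ c) {x : Fin d → ℝ}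
    (hx : x ∈ lcone l) : c • x ∈ lcone l := by
  induction l generalizing x with
  | nil => simp only [lcone, Set.mem_singleton_iff] at *; rw [hx, smul_zero]
  | cons v l ih =>
    obtain ⟨t, ht, hx⟩ := hx
    exact ⟨c * t, mul_nonneg hc ht, by
      have := ih hx
      convert this using 1
      rw [smul_sub, smul_smul]⟩

lemma mem_lcone_of_mem {l : List (Fin d → ℝ)} {g : Fin d → ℝ} (hg : g ∈ l) :
    g ∈ lcone l := by
  induction l with
  | nil => simp at hg
  | cons v l ih =>
    rcases List.mem_cons.1 hg with h | h
    · exact ⟨1, zero_le_one, by simpa [h] using zero_mem_lcone l⟩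
    · exact ⟨0, le_refl 0, by simpa using ih h⟩

lemma lcone_subset {l l' : List (Fin d → ℝ)} (h : ∀ g ∈ l', g ∈ lcone l) :
    lcone l' ⊆ lcone l := by
  induction l' with
  | nil => intro x hx; simp only [lcone, Set.mem_singleton_iff] at hx
           rw [hx]; exact zero_mem_lcone l
  | cons v l' ih =>
    intro x ⟨t, ht, hx⟩
    have h1 : x - t • v ∈ lcone l := ih (fun g hg => h g (List.mem_cons_of_mem _ hg)) hx
    have h2 : t • v ∈ lcone l := lcone_smul ht (h v List.mem_cons_self)
    have := lcone_add h1 h2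
    simpa using this

lemma dotp_lcone_nonpos {l : List (Fin d → ℝ)} {x a : Fin d → ℝ}
    (hx : x ∈ lcone l) (h : ∀ g ∈ l, dotp a g ≤ 0) : dotp a x ≤ 0 := by
  induction l generalizing x with
  | nil => simp only [lcone, Set.mem_singleton_iff] at hx; rw [hx, dotp_zero_right]
  | cons v l ih =>
    obtain ⟨t, ht, hx⟩ := hx
    have h1 : dotp a (x - t • v) ≤ 0 := ih hx fun g hg => h g (List.mem_cons_of_mem _ hg)
    have h2 : dotp a v ≤ 0 := h v List.mem_cons_self
    rw [dotp_sub_right, dotp_smul_right] at h1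
    nlinarith

lemma lcone_map {l : List (Fin d → ℝ)} {e : ℕ} (f : (Fin d → ℝ) →ₗ[ℝ] (Fin e → ℝ))
    {x : Fin d → ℝ} (hx : x ∈ lcone l) : f x ∈ lcone (l.map f) := by
  induction l generalizing x with
  | nil => simp only [lcone, Set.mem_singleton_iff] at hx; rw [hx]
           simpa using zero_mem_lcone ([] : List (Fin e → ℝ))
  | cons v l ih =>
    obtain ⟨t, ht, hx⟩ := hx
    exact ⟨t, ht, by
      have := ih hx
      rw [show f x - t • f v = f (x - t • v) by rw [map_sub, map_smul]]
      exact this⟩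

lemma lcone_map_surj {l : List (Fin d → ℝ)} {e : ℕ} (f : (Fin d → ℝ) →ₗ[ℝ] (Fin e → ℝ))
    {x : Fin e → ℝ} (hx : x ∈ lcone (l.map f)) : ∃ y ∈ lcone l, f y = x := by
  induction l generalizing x with
  | nil => simp only [List.map_nil, lcone, Set.mem_singleton_iff] at hx
           exact ⟨0, zero_mem_lcone _, by rw [hx, map_zero]⟩
  | cons v l ih =>
    obtain ⟨t, ht, hx⟩ := hx
    obtain ⟨y, hy, hfy⟩ := ih hx
    exact ⟨t • v + y, ⟨t, ht, by simpa using hy⟩, by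
      rw [map_add, map_smul, hfy]; abel⟩

lemma lcone_eq_lamSet (l : List (Fin d → ℝ)) :
    lcone l = {x | ∃ lam : Fin l.length → ℝ, (∀ i, 0 ≤ lam i) ∧ x = ∑ i, lam i • l.get i} := by
  induction l with
  | nil =>
    ext x
    simp only [lcone, Set.mem_singleton_iff, Set.mem_setOf_eq, List.length_nil]
    constructor
    · rintro rfl; exact ⟨fun i => 0, fun i => le_refl 0, by simp⟩
    · rintro ⟨lam, _, rfl⟩; simp
  | cons v l ih =>
    ext x
    simp only [lcone, Set.mem_setOf_eq, ih, List.length_cons]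
    constructor
    · rintro ⟨t, ht, lam, hlam, hx⟩
      refine ⟨Fin.cons t lam, fun i => ?_, ?_⟩
      · refine Fin.cases (by simpa using ht) (fun j => by simpa using hlam j) i
      · rw [Fin.sum_univ_succ]
        simp only [Fin.cons_zero, Fin.cons_succ, List.get_cons_zero, List.get_cons_succ']
        rw [← hx]; abel
    · rintro ⟨lam, hlam, rfl⟩
      refine ⟨lam 0, hlam 0, Fin.tail lam, fun j => hlam j.succ, ?_⟩
      rw [Fin.sum_univ_succ]
      simp only [Fin.tail, List.get_cons_zero, List.get_cons_succ']
      abel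

/-- intersection of homogeneous half-spaces -/
def hset (A : Finset (Fin d → ℝ)) : Set (Fin d → ℝ) := {x | ∀ a ∈ A, dotp a x ≤ 0}

open Classical in
lemma weyl_step (v : Fin d → ℝ) (l : List (Fin d → ℝ)) (A : Finset (Fin d → ℝ))
    (hA : lcone l = hset A) : ∃ B : Finset (Fin d → ℝ), lcone (v :: l) = hset B := by
  classical
  refine ⟨(A.filter (fun a => dotp a v ≤ 0)) ∪
      ((A.filter fun a => 0 < dotp a v) ×ˢ (A.filter fun a => dotp a v < 0)).image
        (fun pr => dotp pr.1 v • pr.2 - dotp pr.2 v • pr.1), ?_⟩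
  ext x
  constructor
  · rintro ⟨t, ht, hx⟩
    rw [hA] at hx
    intro g hg
    rcases Finset.mem_union.1 hg with hg | hg
    · rw [Finset.mem_filter] at hg
      have h1 : dotp g (x - t • v) ≤ 0 := hx g hg.1
      rw [dotp_sub_right, dotp_smul_right] at h1
      nlinarith [hg.2]
    · rw [Finset.mem_image] at hg
      obtain ⟨⟨p, n⟩, hpn, rfl⟩ := hg
      rw [Finset.mem_product, Finset.mem_filter, Finset.mem_filter] at hpn
      obtain ⟨⟨hpA, hpv⟩, hnA, hnv⟩ := hpn
      have h1 : dotp p (x - t • v) ≤ 0 := hx p hpA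
      have h2 : dotp n (x - t • v) ≤ 0 := hx n hnA
      rw [dotp_sub_right, dotp_smul_right] at h1 h2
      rw [dotp_sub_left, dotp_smul_left, dotp_smul_left]
      nlinarith
  · intro hx
    simp only [hset, Set.mem_setOf_eq] at hx
    set P := A.filter (fun a => 0 < dotp a v) with hP
    have hrow0 : ∀ a ∈ A, dotp a v ≤ 0 → dotp a x ≤ 0 := by
      intro a ha hav
      exact hx a (Finset.mem_union_left _ (Finset.mem_filter.2 ⟨ha, hav⟩))
    have hrowpair : ∀ p ∈ P, ∀ a ∈ A, dotp a v < 0 →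
        dotp p x / dotp p v ≤ dotp a x / dotp a v := by
      intro p hp a ha hav
      have hpv : 0 < dotp p v := (Finset.mem_filter.1 hp).2
      have hpA : p ∈ A := (Finset.mem_filter.1 hp).1
      have hrow : dotp (dotp p v • a - dotp a v • p) x ≤ 0 :=
        hx _ (Finset.mem_union_right _ (Finset.mem_image.2
          ⟨(p, a), Finset.mem_product.2 ⟨Finset.mem_filter.2 ⟨hpA, hpv⟩,
            Finset.mem_filter.2 ⟨ha, hav⟩⟩, rfl⟩))
      rw [dotp_sub_left, dotp_smul_left, dotp_smul_left] at hrow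
      rw [le_div_iff_of_neg hav, div_mul_eq_mul_div, le_div_iff₀ hpv]
      linarith
    by_cases hPne : P.Nonempty
    · set m := (P.image fun a => dotp a x / dotp a v).max' (hPne.image _) with hm
      refine ⟨max 0 m, le_max_left _ _, ?_⟩
      rw [hA]
      intro a ha
      rw [dotp_sub_right, dotp_smul_right]
      rcases lt_trichotomy (dotp a v) 0 with hav | hav | hav
      · have hub : max 0 m ≤ dotp a x / dotp a v := by
          apply max_le
          · rw [div_nonneg_iff]; right
            exact ⟨hrow0 a ha hav.le, hav.le⟩
          · apply Finset.max'_le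
            intro y hy
            rw [Finset.mem_image] at hy
            obtain ⟨p, hp, rfl⟩ := hy
            exact hrowpair p hp a ha hav
        rw [le_div_iff_of_neg hav] at hub
        linarith
      · rw [hav, mul_zero, sub_zero]; exact hrow0 a ha hav.le
      · have hmem : dotp a x / dotp a v ∈ P.image fun a => dotp a x / dotp a v :=
          Finset.mem_image_of_mem _ (Finset.mem_filter.2 ⟨ha, hav⟩)
        have h2 : dotp a x / dotp a v ≤ max 0 m :=
          le_trans (Finset.le_max' _ _ hmem) (le_max_right _ _)
        rw [div_le_iff₀ hav] at h2
        linarith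
    · refine ⟨0, le_refl 0, ?_⟩
      rw [hA]
      intro a ha
      rw [dotp_sub_right, dotp_smul_right, zero_mul, sub_zero]
      apply hrow0 a ha
      by_contra h
      exact hPne ⟨a, Finset.mem_filter.2 ⟨ha, lt_of_not_ge h⟩⟩

/-- Weyl: every finitely generated cone is an H-cone. -/
theorem weyl (l : List (Fin d → ℝ)) : ∃ A : Finset (Fin d → ℝ), lcone l = hset A := by
  induction l with
  | nil =>
    classical
    refine ⟨(Finset.univ.image fun i : Fin d => Pi.single i (1:ℝ)) ∪
        (Finset.univ.image fun i : Fin d => -Pi.single i (1:ℝ)), ?_⟩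
    have key : ∀ (i : Fin d) (x : Fin d → ℝ), dotp (Pi.single i (1:ℝ)) x = x i := by
      intro i x
      unfold dotp
      rw [Finset.sum_eq_single i]
      · simp
      · intro b _ hb; simp [Pi.single_apply, hb.symm]
      · simp
    ext x
    simp only [lcone, Set.mem_singleton_iff, hset, Set.mem_setOf_eq]
    constructor
    · rintro rfl
      intro a ha
      rcases Finset.mem_union.1 ha with h | h <;>
        · obtain ⟨i, _, rfl⟩ := Finset.mem_image.1 h
          simp [dotp]
    · intro h
      funext i
      have h1 := h _ (Finset.mem_union_left _ (Finset.mem_image_of_mem _ (Finset.mem_univ i)))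
      have h2 := h _ (Finset.mem_union_right _ (Finset.mem_image_of_mem _ (Finset.mem_univ i)))
      rw [key] at h1
      have : dotp (-Pi.single i (1:ℝ)) x = -(x i) := by
        rw [show -Pi.single i (1:ℝ) = (0:Fin d → ℝ) - Pi.single i 1 by abel,
          dotp_sub_left, key]
        simp [dotp]
      rw [this] at h2
      simp only [Pi.zero_apply]
      linarith
  | cons v l ih =>
    obtain ⟨A, hA⟩ := ih
    exact weyl_step v l A hA

/-- Minkowski: every H-cone is finitely generated. -/
theorem mink (A : Finset (Fin d → ℝ)) : ∃ l : List (Fin d → ℝ), hset A = lcone l := by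
  obtain ⟨B, hB⟩ := weyl A.toList
  refine ⟨B.toList, ?_⟩
  have hBsub : lcone B.toList ⊆ hset A := by
    intro x hx a ha
    apply dotp_lcone_nonpos hx
    intro b hb
    rw [Finset.mem_toList] at hb
    have haA : a ∈ lcone A.toList := mem_lcone_of_mem (Finset.mem_toList.2 ha)
    rw [hB] at haA
    rw [dotp_comm]
    exact haA b hb
  refine Set.Subset.antisymm ?_ hBsub
  intro x hx
  by_contra hxB
  obtain ⟨C, hC⟩ := weyl B.toList
  rw [hC] at hxB
  simp only [hset, Set.mem_setOf_eq, not_forall] at hxB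
  obtain ⟨c, hcC, hcx⟩ := hxB
  push_neg at hcx
  have hcB : c ∈ hset B := by
    intro b hb
    have : b ∈ lcone B.toList := mem_lcone_of_mem (Finset.mem_toList.2 hb)
    rw [hC] at this
    rw [dotp_comm]
    exact this c hcC
  rw [← hB] at hcB
  have : dotp x c ≤ 0 := by
    apply dotp_lcone_nonpos hcB
    intro g hg
    rw [dotp_comm]
    exact hx g (Finset.mem_toList.1 hg)
  rw [dotp_comm] at this
  linarith

lemma dotp_zero_left {d : ℕ} (x : Fin d → ℝ) : dotp 0 x = 0 := by
  rw [dotp_comm, dotp_zero_right]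

lemma lcone_sum {d : ℕ} {ι : Type*} (s : Finset ι) (c : ι → ℝ) (f : ι → Fin d → ℝ)
    (l : List (Fin d → ℝ)) (hc : ∀ i ∈ s, 0 ≤ c i) (hf : ∀ i ∈ s, f i ∈ lcone l) :
    (∑ i ∈ s, c i • f i) ∈ lcone l := by
  classical
  induction s using Finset.induction with
  | empty => simpa using zero_mem_lcone l
  | insert x s hnot ih =>
    rw [Finset.sum_insert hnot]
    exact lcone_add (lcone_smul (hc x (Finset.mem_insert_self _ _)) (hf x (Finset.mem_insert_self _ _)))
      (ih (fun i hi => hc i (Finset.mem_insert_of_mem hi)) (fun i hi => hf i (Finset.mem_insert_of_mem hi)))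

/-- Splitting a finitely generated cone into a pointed cone plus its lineality space. -/
lemma cone_decomp {d : ℕ} (R : List (Fin d → ℝ)) :
    ∃ (C : Set (Fin d → ℝ)) (L : Submodule ℝ (Fin d → ℝ)),
      IsPolyhedralCone C ∧ C ∩ (-C) = {0} ∧ lcone R = C + (L : Set (Fin d → ℝ)) := by
  classical
  set CR := lcone R with hCR
  let L0 : Submodule ℝ (Fin d → ℝ) :=
  { carrier := {x | x ∈ CR ∧ -x ∈ CR}
    add_mem' := by
      rintro a b ⟨ha1, ha2⟩ ⟨hb1, hb2⟩
      exact ⟨lcone_add ha1 hb1, by rw [neg_add]; exact lcone_add ha2 hb2⟩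
    zero_mem' := ⟨zero_mem_lcone R, by rw [neg_zero]; exact zero_mem_lcone R⟩
    smul_mem' := by
      rintro c x ⟨h1, h2⟩
      rcases le_or_gt 0 c with hc | hc
      · exact ⟨lcone_smul hc h1, by rw [← smul_neg]; exact lcone_smul hc h2⟩
      · constructor
        · rw [show c • x = (-c) • (-x) by rw [neg_smul, smul_neg, neg_neg]]
          exact lcone_smul (by linarith) h2
        · rw [show -(c • x) = (-c) • x by rw [neg_smul]]
          exact lcone_smul (by linarith) h1 }
  have hL0mem : ∀ y, y ∈ L0 ↔ (y ∈ CR ∧ -y ∈ CR) := fun y => Iff.rfl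
  obtain ⟨M, hM⟩ := Submodule.exists_isCompl L0
  let π : (Fin d → ℝ) →ₗ[ℝ] (Fin d → ℝ) :=
    M.subtype ∘ₗ Submodule.projectionOnto M L0 hM.symm
  have hπL : ∀ y ∈ L0, π y = 0 := by
    intro y hy
    simp [π, Submodule.projectionOnto_apply_of_mem_right hM.symm hy]
  have hπdiff : ∀ x, x - π x ∈ L0 := by
    intro x
    have h : (L0.projectionOnto M hM x : Fin d → ℝ) + (M.projectionOnto L0 hM.symm x : Fin d → ℝ) = x :=
      Submodule.projection_add_projection_eq_self hM x
    have : x - π x = (L0.projectionOnto M hM x : Fin d → ℝ) := by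
      simp only [π, LinearMap.comp_apply, Submodule.subtype_apply]
      linear_combination -h
    rw [this]
    exact (L0.projectionOnto M hM x).2
  set Cl := R.map π with hCl
  have hCsubCR : lcone Cl ⊆ CR := by
    apply lcone_subset
    intro g hg
    rw [hCl, List.mem_map] at hg
    obtain ⟨r, hr, rfl⟩ := hg
    have hrCR : r ∈ CR := mem_lcone_of_mem hr
    have hdiff := hπdiff r
    have : π r = r + (-(r - π r)) := by abel
    rw [this]
    exact lcone_add hrCR ((hL0mem _).1 hdiff).2
  refine ⟨lcone Cl, L0, ⟨Cl.length, Cl.get, lcone_eq_lamSet Cl⟩, ?_, ?_⟩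
  · ext v
    simp only [Set.mem_inter_iff, Set.mem_neg, Set.mem_singleton_iff]
    constructor
    · rintro ⟨h1, h2⟩
      obtain ⟨c1, hc1, hfc1⟩ := lcone_map_surj π h1
      obtain ⟨c2, hc2, hfc2⟩ := lcone_map_surj π h2
      have hsum : π (c1 + c2) = 0 := by rw [map_add, hfc1, hfc2]; abel
      have hL : c1 + c2 ∈ L0 := by
        have := hπdiff (c1 + c2)
        rwa [hsum, sub_zero] at this
      have hnegc1 : -c1 ∈ CR := by
        have h3 : -(c1 + c2) ∈ CR := ((hL0mem _).1 hL).2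
        have : -c1 = c2 + (-(c1 + c2)) := by abel
        rw [this]
        exact lcone_add hc2 h3
      have : c1 ∈ L0 := (hL0mem _).2 ⟨hc1, hnegc1⟩
      rw [← hfc1, hπL c1 this]
    · rintro rfl
      exact ⟨zero_mem_lcone Cl, by rw [neg_zero]; exact zero_mem_lcone Cl⟩
  · ext x
    constructor
    · intro hx
      rw [Set.mem_add]
      refine ⟨π x, lcone_map π hx, x - π x, hπdiff x, by abel⟩
    · rw [Set.mem_add]
      rintro ⟨c, hc, y, hy, rfl⟩
      exact lcone_add (hCsubCR hc) ((hL0mem _).1 hy).1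

lemma dotp_cons_left {d : ℕ} (c : ℝ) (u : Fin d → ℝ) (w : Fin (d+1) → ℝ) :
    dotp (Fin.cons c u) w = c * w 0 + dotp u (Fin.tail w) := by
  unfold dotp
  rw [Fin.sum_univ_succ]
  simp [Fin.tail]

end MW

open MW in
/-- Minkowski–Weyl decomposition: every nonempty polyhedron `Q` decomposes as a
Minkowski sum `Q = P + C + L` with `P` a polytope, `C` a pointed polyhedral cone
(containing no line, i.e. `C ∩ (-C) = {0}`), and `L` a linear subspace. -/
theorem minkowski_weyl_decomposition (d : ℕ) (Q : Set (Fin d → ℝ))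
    (hQ : IsPolyhedron Q) (hne : Q.Nonempty) :
    ∃ (P C : Set (Fin d → ℝ)) (L : Submodule ℝ (Fin d → ℝ)),
      IsPolytope P ∧ IsPolyhedralCone C ∧ C ∩ (-C) = {0} ∧
      Q = P + C + (L : Set (Fin d → ℝ)) := by
  classical
  obtain ⟨m, a, b, hQeq⟩ := hQ
  set A' : Finset (Fin (d+1) → ℝ) :=
    insert (Fin.cons (-1) 0)
      ((Finset.univ : Finset (Fin m)).image fun i => Fin.cons (-(b i)) (a i)) with hA'
  have hK : ∀ y : Fin (d+1) → ℝ, y ∈ hset A' ↔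
      (0 ≤ y 0 ∧ ∀ i, dotp (a i) (Fin.tail y) ≤ y 0 * b i) := by
    intro y
    constructor
    · intro hy
      constructor
      · have := hy _ (Finset.mem_insert_self _ _)
        rw [dotp_cons_left, dotp_zero_left] at this
        linarith
      · intro i
        have := hy _ (Finset.mem_insert_of_mem (Finset.mem_image_of_mem _ (Finset.mem_univ i)))
        rw [dotp_cons_left] at this
        nlinarith [this]
    · rintro ⟨h0, h⟩ g hg
      rcases Finset.mem_insert.1 hg with rfl | hg
      · rw [dotp_cons_left, dotp_zero_left]; linarith
      · obtain ⟨i, _, rfl⟩ := Finset.mem_image.1 hg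
        rw [dotp_cons_left]
        nlinarith [h i]
  obtain ⟨Lst, hLst⟩ := mink A'
  set k := Lst.length with hk
  set w : Fin k → (Fin (d+1) → ℝ) := Lst.get with hw
  have hgen : ∀ i : Fin k, (0 ≤ w i 0 ∧ ∀ j, dotp (a j) (Fin.tail (w i)) ≤ w i 0 * b j) := by
    intro i
    rw [← hK]
    rw [hLst]
    exact mem_lcone_of_mem (Lst.get_mem i)
  set Pos : Finset (Fin k) := Finset.univ.filter (fun i => 0 < w i 0) with hPos
  have hzero : ∀ i : Fin k, i ∉ Pos → w i 0 = 0 := by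
    intro i hi
    rcases (hgen i).1.eq_or_lt with h | h
    · exact h.symm
    · exact absurd (Finset.mem_filter.2 ⟨Finset.mem_univ i, h⟩) hi
  set Vset : Finset (Fin d → ℝ) := Pos.image (fun i => (w i 0)⁻¹ • Fin.tail (w i)) with hVset
  set Rlist : List (Fin d → ℝ) :=
    (Finset.univ.filter (fun i : Fin k => i ∉ Pos)).toList.map (fun i => Fin.tail (w i)) with hRlist
  -- half-space bounds on the pieces
  have hVbound : ∀ j, ∀ v ∈ (Vset : Set (Fin d → ℝ)), dotp (a j) v ≤ b j := by
    intro j v hv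
    obtain ⟨i, hiPos, rfl⟩ := Finset.mem_image.1 hv
    have hpos : 0 < w i 0 := (Finset.mem_filter.1 hiPos).2
    rw [dotp_smul_right]
    rw [inv_mul_le_iff₀ hpos]  -- may need name fix
    calc dotp (a j) (Fin.tail (w i)) ≤ w i 0 * b j := (hgen i).2 j
    _ = w i 0 * b j := rfl
  have hRbound : ∀ j, ∀ g ∈ Rlist, dotp (a j) g ≤ 0 := by
    intro j g hg
    rw [hRlist, List.mem_map] at hg
    obtain ⟨i, hi, rfl⟩ := hg
    rw [Finset.mem_toList, Finset.mem_filter] at hi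
    have h0 : w i 0 = 0 := hzero i hi.2
    have := (hgen i).2 j
    rw [h0, zero_mul] at this
    exact this
  -- the key decomposition  Q = conv V + cone R
  have hQdecomp : Q = convexHull ℝ (Vset : Set (Fin d → ℝ)) + lcone Rlist := by
    apply Set.Subset.antisymm
    · intro x hx
      rw [hQeq] at hx
      have hy : Fin.cons 1 x ∈ hset A' := by
        rw [hK]
        constructor
        · simp
        · intro i
          simp only [Fin.tail_cons, Fin.cons_zero, one_mul]
          exact hx i
      rw [hLst, lcone_eq_lamSet] at hy
      obtain ⟨lam, hlam, hyeq⟩ := hy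
      have hcoord0 : (1 : ℝ) = ∑ i, lam i * w i 0 := by
        have := congrFun hyeq 0
        simpa [Fin.cons_zero, Finset.sum_apply, hw] using this
      have hcoordtail : x = ∑ i, lam i • Fin.tail (w i) := by
        funext j
        have := congrFun hyeq j.succ
        simpa [Fin.cons_succ, Finset.sum_apply, Fin.tail, hw] using this
      have hsum1 : ∑ i ∈ Pos, lam i * w i 0 = 1 := by
        rw [hcoord0]
        apply Finset.sum_subset (Finset.subset_univ _)
        intro i _ hi
        rw [hzero i hi, mul_zero]
      set p : Fin d → ℝ := ∑ i ∈ Pos, (lam i * w i 0) • ((w i 0)⁻¹ • Fin.tail (w i)) with hp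
      set c : Fin d → ℝ := ∑ i ∈ Finset.univ.filter (fun i => i ∉ Pos), lam i • Fin.tail (w i) with hc
      have hxsplit : x = p + c := by
        rw [hcoordtail, hp, hc]
        rw [← Finset.sum_filter_add_sum_filter_not Finset.univ (fun i => i ∈ Pos)]
        congr 1
        · rw [show Finset.univ.filter (fun i => i ∈ Pos) = Pos by
            simp [Finset.filter_mem_eq_inter]]
          apply Finset.sum_congr rfl
          intro i hi
          have hpos : 0 < w i 0 := (Finset.mem_filter.1 hi).2
          rw [smul_smul, mul_assoc, mul_inv_cancel₀ hpos.ne', mul_one]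
      have hpmem : p ∈ convexHull ℝ (Vset : Set (Fin d → ℝ)) := by
        have := Finset.centerMass_mem_convexHull (t := Pos)
          (w := fun i => lam i * w i 0) (z := fun i => (w i 0)⁻¹ • Fin.tail (w i))
          (hws := by rw [hsum1]; norm_num)
          (hz := fun i hi => Finset.mem_coe.2 (Finset.mem_image_of_mem _ hi))
          (s := (Vset : Set (Fin d → ℝ)))
          (fun i hi => mul_nonneg (hlam i) (hgen i).1)
        rwa [Finset.centerMass, hsum1, inv_one, one_smul] at this
      have hcmem : c ∈ lcone Rlist := by
        apply lcone_sum
        · intro i _; exact hlam i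
        · intro i hi
          apply mem_lcone_of_mem
          rw [hRlist, List.mem_map]
          exact ⟨i, Finset.mem_toList.2 hi, rfl⟩
      rw [Set.mem_add]
      exact ⟨p, hpmem, c, hcmem, hxsplit.symm⟩
    · rintro x hx
      rw [Set.mem_add] at hx
      obtain ⟨p, hpmem, c, hcmem, rfl⟩ := hx
      rw [hQeq]
      intro j
      have hp : dotp (a j) p ≤ b j := by
        have hconv : convexHull ℝ (Vset : Set (Fin d → ℝ)) ⊆ {z | dotp (a j) z ≤ b j} := by
          apply convexHull_min
          · exact fun v hv => hVbound j v hv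
          · exact convex_halfSpace_le ⟨fun x y => dotp_add_right _ x y,
              fun c x => dotp_smul_right _ c x⟩ _
        exact hconv hpmem
      have hc : dotp (a j) c ≤ 0 := dotp_lcone_nonpos hcmem (hRbound j)
      rw [dotp_add_right]
      linarith
  obtain ⟨C, L, hCcone, hCpointed, hRdecomp⟩ := cone_decomp Rlist
  refine ⟨convexHull ℝ (Vset : Set (Fin d → ℝ)), C, L, ⟨Vset, rfl⟩, hCcone, hCpointed, ?_⟩
  rw [hQdecomp, hRdecomp, add_assoc]
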